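/- There exists an absolute constant c > 0 (independent of n, a, b and W) such that: for every n ≥ 3, every 0 < a ≤ b, and every symmetric n×n matrix W with zero diagonal and W_{ij} ∈ [a,b] for all i ≠ j, every nonzero vector x orthogonal to v satisfies c·(a/b)² ≤ (xᵀ L_sym x)/(xᵀ x) ≤ 2 − c·(a/b)². In particular, the second-smallest eigenvalue λ₂ of L_sym is at least c(a/b)² and the largest eigenvalue λ_n is at most 2 − c(a/b)², so max{1 − λ₂, λ_n − 1} ≤ 1 − c(a/b)². -/

import Mathlib

open Matrix Finset


lemma deg_bounds {n : ℕ} (hn : 3 ≤ n) {a b : ℝ} (ha : 0 < a) (hab : a ≤ b)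
    (W : Matrix (Fin n) (Fin n) ℝ) (hdiag : ∀ i, W i i = 0)
    (hmem : ∀ i j, i ≠ j → W i j ∈ Set.Icc a b) (i : Fin n) :
    ((n : ℝ) - 1) * a ≤ ∑ j, W i j ∧ ∑ j, W i j ≤ ((n : ℝ) - 1) * b := by
  have hb : 0 < b := ha.trans_le hab
  have herase : ∑ j, W i j = ∑ j ∈ Finset.univ.erase i, W i j :=
    (Finset.sum_erase _ (hdiag i)).symm
  have hcard : (Finset.univ.erase i).card = n - 1 := by
    simp [Finset.card_erase_of_mem, Finset.card_univ]
  have hcast : (((n - 1 : ℕ) : ℝ)) = (n : ℝ) - 1 := by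
    have : 1 ≤ n := by omega
    push_cast [this]
    ring
  constructor
  · have h := Finset.card_nsmul_le_sum (Finset.univ.erase i) (fun j => W i j) a
      (fun j hj => (hmem i j (Ne.symm (Finset.ne_of_mem_erase hj))).1)
    rw [hcard, nsmul_eq_mul, hcast] at h
    rw [herase]
    exact h
  · have h := Finset.sum_le_card_nsmul (Finset.univ.erase i) (fun j => W i j) b
      (fun j hj => (hmem i j (Ne.symm (Finset.ne_of_mem_erase hj))).2)
    rw [hcard, nsmul_eq_mul, hcast] at h
    rw [herase]
    exact h

set_option maxHeartbeats 1000000 in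
lemma quad_bounds {n : ℕ} (hn : 3 ≤ n) {a b : ℝ} (ha : 0 < a) (hab : a ≤ b)
    (W : Matrix (Fin n) (Fin n) ℝ) (hsymm : ∀ i j, W j i = W i j) (hdiag : ∀ i, W i i = 0)
    (hmem : ∀ i j, i ≠ j → W i j ∈ Set.Icc a b)
    (D : Fin n → ℝ) (hDdef : ∀ i, D i = ∑ j, W i j)
    (y : Fin n → ℝ) (hy : y ≠ 0) (horth : ∑ i, D i * y i = 0) :
    0 < ∑ i, D i * y i ^ 2 ∧
      a ^ 2 * (∑ i, D i * y i ^ 2) ≤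
        3 * b ^ 2 * ((∑ i, D i * y i ^ 2) - ∑ i, ∑ j, W i j * (y i * y j)) ∧
      a ^ 2 * (∑ i, D i * y i ^ 2) ≤
        3 * b ^ 2 * ((∑ i, D i * y i ^ 2) + ∑ i, ∑ j, W i j * (y i * y j)) := by
  have hb : 0 < b := ha.trans_le hab
  have hn3 : (3 : ℝ) ≤ (n : ℝ) := by exact_mod_cast hn
  have hDL : ∀ i, ((n : ℝ) - 1) * a ≤ D i := fun i => by
    rw [hDdef i]; exact (deg_bounds hn ha hab W hdiag hmem i).1
  have hDU : ∀ i, D i ≤ ((n : ℝ) - 1) * b := fun i => by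
    rw [hDdef i]; exact (deg_bounds hn ha hab W hdiag hmem i).2
  have hn1 : (0 : ℝ) < (n : ℝ) - 1 := by linarith
  have hDpos : ∀ i, 0 < D i := fun i => lt_of_lt_of_le (mul_pos hn1 ha) (hDL i)
  set S : ℝ := ∑ i, y i ^ 2 with hS
  set sg : ℝ := ∑ i, y i with hsg
  set Q : ℝ := ∑ i, D i * y i ^ 2 with hQ
  set B : ℝ := ∑ i, ∑ j, W i j * (y i * y j) with hB
  clear_value S sg Q B
  -- S > 0
  obtain ⟨i0, hi0⟩ := Function.ne_iff.mp hy
  have hS0 : 0 < S := by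
    have hi0' : y i0 ≠ 0 := by simpa using hi0
    have h1 : 0 < y i0 ^ 2 :=
      lt_of_le_of_ne (sq_nonneg _) (Ne.symm (pow_ne_zero 2 hi0'))
    have h2 : y i0 ^ 2 ≤ ∑ i, y i ^ 2 := Finset.single_le_sum (f := fun i => y i ^ 2)
      (fun i _ => sq_nonneg (y i)) (Finset.mem_univ i0)
    rw [hS]; linarith
  -- basic sum identities
  have hA1 : (∑ i, ∑ j, W i j * y i ^ 2) = Q := by
    rw [hQ]
    exact Finset.sum_congr rfl fun i _ => by rw [← Finset.sum_mul, ← hDdef i]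
  have hA2 : (∑ i, ∑ j, W i j * y j ^ 2) = Q := by
    rw [Finset.sum_comm, hQ]
    refine Finset.sum_congr rfl fun j _ => ?_
    rw [← Finset.sum_mul, hDdef j]
    congr 1
    exact Finset.sum_congr rfl fun i _ => hsymm j i
  have hId1 : ∑ i, ∑ j, W i j * (y i - y j) ^ 2 = 2 * Q - 2 * B := by
    have e : ∀ i : Fin n, ∑ j, W i j * (y i - y j) ^ 2 =
        ((∑ j, W i j * y i ^ 2) + ∑ j, W i j * y j ^ 2) - 2 * ∑ j, W i j * (y i * y j) := by
      intro i
      rw [Finset.mul_sum, ← Finset.sum_add_distrib, ← Finset.sum_sub_distrib]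
      exact Finset.sum_congr rfl fun j _ => by ring
    simp_rw [e]
    rw [Finset.sum_sub_distrib, Finset.sum_add_distrib, hA1, hA2, ← Finset.mul_sum, ← hB]
    ring
  have hId2 : ∑ i, ∑ j, W i j * (y i + y j) ^ 2 = 2 * Q + 2 * B := by
    have e : ∀ i : Fin n, ∑ j, W i j * (y i + y j) ^ 2 =
        ((∑ j, W i j * y i ^ 2) + ∑ j, W i j * y j ^ 2) + 2 * ∑ j, W i j * (y i * y j) := by
      intro i
      rw [Finset.mul_sum, ← Finset.sum_add_distrib, ← Finset.sum_add_distrib]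
      exact Finset.sum_congr rfl fun j _ => by ring
    simp_rw [e]
    rw [Finset.sum_add_distrib, Finset.sum_add_distrib, hA1, hA2, ← Finset.mul_sum, ← hB]
    ring
  have hC1 : ∀ i : Fin n, ∑ j, y i * y j = y i * sg := fun i => by
    rw [hsg, Finset.mul_sum]
  have hC2 : ∀ c : ℝ, ∑ _j : Fin n, c = (n : ℝ) * c := fun c => by
    rw [Finset.sum_const, Finset.card_univ, Fintype.card_fin, nsmul_eq_mul]
  have hId3 : ∑ i, ∑ j, (y i - y j) ^ 2 = 2 * (n : ℝ) * S - 2 * sg ^ 2 := by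
    have e : ∀ i : Fin n, ∑ j, (y i - y j) ^ 2 =
        (n : ℝ) * y i ^ 2 + S - 2 * (y i * sg) := by
      intro i
      have e1 : ∀ j : Fin n, (y i - y j) ^ 2 = (y i ^ 2 + y j ^ 2) - 2 * (y i * y j) :=
        fun j => by ring
      simp_rw [e1]
      rw [Finset.sum_sub_distrib, Finset.sum_add_distrib, ← Finset.mul_sum, hC1 i, hC2, ← hS]
    simp_rw [e]
    rw [Finset.sum_sub_distrib, Finset.sum_add_distrib, ← Finset.mul_sum, ← hS, hC2,
      ← Finset.mul_sum, ← Finset.sum_mul, ← hsg]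
    ring
  have hId4 : ∑ i, ∑ j, (y i + y j) ^ 2 = 2 * (n : ℝ) * S + 2 * sg ^ 2 := by
    have e : ∀ i : Fin n, ∑ j, (y i + y j) ^ 2 =
        (n : ℝ) * y i ^ 2 + S + 2 * (y i * sg) := by
      intro i
      have e1 : ∀ j : Fin n, (y i + y j) ^ 2 = (y i ^ 2 + y j ^ 2) + 2 * (y i * y j) :=
        fun j => by ring
      simp_rw [e1]
      rw [Finset.sum_add_distrib, Finset.sum_add_distrib, ← Finset.mul_sum, hC1 i, hC2, ← hS]
    simp_rw [e]
    rw [Finset.sum_add_distrib, Finset.sum_add_distrib, ← Finset.mul_sum, ← hS, hC2,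
      ← Finset.mul_sum, ← Finset.sum_mul, ← hsg]
    ring
  -- key inequality 1
  have key1 : a * ∑ i, ∑ j, (y i - y j) ^ 2 ≤ ∑ i, ∑ j, W i j * (y i - y j) ^ 2 := by
    rw [Finset.mul_sum]
    refine Finset.sum_le_sum fun i _ => ?_
    rw [Finset.mul_sum]
    refine Finset.sum_le_sum fun j _ => ?_
    rcases eq_or_ne i j with h | h
    · subst h; simp
    · exact mul_le_mul_of_nonneg_right (hmem i j h).1 (sq_nonneg _)
  -- key inequality 2
  have key2 : ∀ i : Fin n,
      a * (∑ j, (y i + y j) ^ 2) - 4 * a * y i ^ 2 ≤ ∑ j, W i j * (y i + y j) ^ 2 := by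
    intro i
    have h1 : ∀ j : Fin n,
        a * (y i + y j) ^ 2 - (if j = i then 4 * a * y i ^ 2 else 0) ≤
          W i j * (y i + y j) ^ 2 := by
      intro j
      by_cases hji : j = i
      · subst hji
        rw [if_pos rfl, hdiag j]
        nlinarith [sq_nonneg (y j)]
      · rw [if_neg hji, sub_zero]
        exact mul_le_mul_of_nonneg_right (hmem i j (fun h => hji h.symm)).1 (sq_nonneg _)
    have h2 := Finset.sum_le_sum (fun j (_ : j ∈ Finset.univ) => h1 j)
    rw [Finset.sum_sub_distrib, ← Finset.mul_sum,
      Finset.sum_ite_eq' Finset.univ i (fun _ => 4 * a * y i ^ 2), if_pos (Finset.mem_univ i)]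
      at h2
    exact h2
  have key2' : a * (∑ i, ∑ j, (y i + y j) ^ 2) - 4 * a * S ≤
      ∑ i, ∑ j, W i j * (y i + y j) ^ 2 := by
    have h2 := Finset.sum_le_sum (fun i (_ : i ∈ Finset.univ) => key2 i)
    rw [Finset.sum_sub_distrib, ← Finset.mul_sum, ← Finset.mul_sum, ← hS] at h2
    exact h2
  have hR1 : a * ((n : ℝ) * S - sg ^ 2) ≤ Q - B := by
    have := key1
    rw [hId1, hId3] at this
    linarith
  have hR2 : a * (((n : ℝ) - 2) * S) ≤ Q + B := by
    have := key2'
    rw [hId2, hId4] at this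
    have hasg : 0 ≤ a * sg ^ 2 := mul_nonneg ha.le (sq_nonneg sg)
    nlinarith
  -- Cauchy-Schwarz with orthogonality
  set m : ℝ := ((n : ℝ) - 1) * b with hm
  have hm0 : 0 < m := mul_pos hn1 hb
  have hsg_eq : sg = ∑ i, y i * ((m - D i) / m) := by
    have e : ∀ i : Fin n, y i * ((m - D i) / m) = y i - D i * y i / m := by
      intro i
      field_simp
    simp_rw [e]
    rw [Finset.sum_sub_distrib, ← Finset.sum_div, horth, ← hsg]
    simp
  have hCS : sg ^ 2 ≤ S * ∑ i, ((m - D i) / m) ^ 2 := by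
    rw [hsg_eq, hS]
    exact Finset.sum_mul_sq_le_sq_mul_sq _ _ _
  have hgb : ∀ i, ((m - D i) / m) ^ 2 ≤ ((b - a) / b) ^ 2 := by
    intro i
    have h1 : 0 ≤ m - D i := by have := hDU i; rw [hm]; linarith
    have h2 : (m - D i) / m ≤ (b - a) / b := by
      rw [div_le_div_iff₀ hm0 hb]
      have := hDL i
      rw [hm]
      nlinarith
    exact pow_le_pow_left₀ (div_nonneg h1 hm0.le) h2 2
  have hsum_g : ∑ i, ((m - D i) / m) ^ 2 ≤ (n : ℝ) * ((b - a) / b) ^ 2 := by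
    calc ∑ i, ((m - D i) / m) ^ 2 ≤ ∑ _i : Fin n, ((b - a) / b) ^ 2 :=
          Finset.sum_le_sum fun i _ => hgb i
      _ = (n : ℝ) * ((b - a) / b) ^ 2 := hC2 _
  have hsg2 : sg ^ 2 ≤ S * ((n : ℝ) * ((b - a) / b) ^ 2) :=
    hCS.trans (mul_le_mul_of_nonneg_left hsum_g hS0.le)
  have hbsg : b ^ 2 * sg ^ 2 ≤ (n : ℝ) * (b - a) ^ 2 * S := by
    have h := mul_le_mul_of_nonneg_left hsg2 (sq_nonneg b)
    have e : b ^ 2 * (S * ((n : ℝ) * ((b - a) / b) ^ 2)) = (n : ℝ) * (b - a) ^ 2 * S := by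
      field_simp
    rw [e] at h
    exact h
  have hlow : (n : ℝ) * a * b * S ≤ b ^ 2 * ((n : ℝ) * S - sg ^ 2) := by
    have h0 : 0 ≤ (n : ℝ) * a * (b - a) * S :=
      mul_nonneg (mul_nonneg (mul_nonneg (Nat.cast_nonneg n) ha.le) (by linarith)) hS0.le
    linarith [hbsg, h0]
  have hQle : Q ≤ (n : ℝ) * b * S := by
    have h1 : Q ≤ (((n : ℝ) - 1) * b) * S := by
      rw [hQ]
      calc ∑ i, D i * y i ^ 2 ≤ ∑ i, ((n : ℝ) - 1) * b * y i ^ 2 :=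
            Finset.sum_le_sum fun i _ => mul_le_mul_of_nonneg_right (hDU i) (sq_nonneg _)
        _ = (((n : ℝ) - 1) * b) * S := by rw [← Finset.mul_sum, ← hS]
    nlinarith [mul_nonneg hb.le hS0.le]
  have hQpos : 0 < Q := by
    have h1 : (((n : ℝ) - 1) * a) * S ≤ Q := by
      rw [hQ]
      calc (((n : ℝ) - 1) * a) * S = ∑ i, ((n : ℝ) - 1) * a * y i ^ 2 := by
            rw [← Finset.mul_sum, ← hS]
        _ ≤ ∑ i, D i * y i ^ 2 :=
            Finset.sum_le_sum fun i _ => mul_le_mul_of_nonneg_right (hDL i) (sq_nonneg _)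
    have := mul_pos (mul_pos hn1 ha) hS0
    linarith
  refine ⟨hQpos, ?_, ?_⟩
  · have t1 : a ^ 2 * Q ≤ a ^ 2 * ((n : ℝ) * b * S) :=
      mul_le_mul_of_nonneg_left hQle (sq_nonneg a)
    have t2 : 3 * a * ((n : ℝ) * a * b * S) ≤ 3 * a * (b ^ 2 * ((n : ℝ) * S - sg ^ 2)) :=
      mul_le_mul_of_nonneg_left hlow (by positivity)
    have t3 : 3 * b ^ 2 * (a * ((n : ℝ) * S - sg ^ 2)) ≤ 3 * b ^ 2 * (Q - B) :=
      mul_le_mul_of_nonneg_left hR1 (by positivity)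
    have t4 : 0 ≤ (n : ℝ) * a ^ 2 * b * S :=
      mul_nonneg (mul_nonneg (mul_nonneg (Nat.cast_nonneg n) (sq_nonneg a)) hb.le) hS0.le
    nlinarith [t1, t2, t3, t4]
  · have t1 : a ^ 2 * Q ≤ a ^ 2 * ((n : ℝ) * b * S) :=
      mul_le_mul_of_nonneg_left hQle (sq_nonneg a)
    have hmid : a * (n : ℝ) ≤ 3 * b * ((n : ℝ) - 2) := by
      have h1 : a * (n : ℝ) ≤ b * (n : ℝ) :=
        mul_le_mul_of_nonneg_right hab (Nat.cast_nonneg n)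
      have h2 : 0 ≤ b * ((n : ℝ) - 3) := mul_nonneg hb.le (by linarith)
      nlinarith
    have u2 : a * (n : ℝ) * (a * b * S) ≤ 3 * b * ((n : ℝ) - 2) * (a * b * S) :=
      mul_le_mul_of_nonneg_right hmid
        (mul_nonneg (mul_nonneg ha.le hb.le) hS0.le)
    have u3 : 3 * b ^ 2 * (a * (((n : ℝ) - 2) * S)) ≤ 3 * b ^ 2 * (Q + B) :=
      mul_le_mul_of_nonneg_left hR2 (by positivity)
    nlinarith [t1, u2, u3]

set_option maxHeartbeats 1000000 in
/-- there is an absolute constant `c > 0` such that for every `n ≥ 3`,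
every `0 < a ≤ b` and every symmetric weight matrix `W` with zero diagonal and
off-diagonal entries in `[a,b]`, every nonzero `x` orthogonal to
`v = (√(D_i/∑_k D_k))_i` satisfies
`c(a/b)² ≤ xᵀ L_sym x / xᵀx ≤ 2 − c(a/b)²` for the normalized Laplacian
`L_sym = I − D^{-1/2} W D^{-1/2}`. -/
theorem cheeger_spectral_gap_dense_weights :
    ∃ c : ℝ, 0 < c ∧
      ∀ (n : ℕ), 3 ≤ n → ∀ a b : ℝ, 0 < a → a ≤ b →
        ∀ W : Matrix (Fin n) (Fin n) ℝ, W.IsSymm → (∀ i, W i i = 0) →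
          (∀ i j, i ≠ j → W i j ∈ Set.Icc a b) →
          ∀ x : Fin n → ℝ, x ≠ 0 →
            (∑ i, x i * Real.sqrt ((∑ j, W i j) / (∑ k, ∑ j, W k j)) = 0) →
            c * (a / b) ^ 2 ≤
                (x ⬝ᵥ ((1 : Matrix (Fin n) (Fin n) ℝ) -
                  Matrix.of (fun i j =>
                    W i j / (Real.sqrt (∑ l, W i l) * Real.sqrt (∑ l, W j l)))).mulVec x) /
                  (x ⬝ᵥ x) ∧
              (x ⬝ᵥ ((1 : Matrix (Fin n) (Fin n) ℝ) -
                  Matrix.of (fun i j =>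
                    W i j / (Real.sqrt (∑ l, W i l) * Real.sqrt (∑ l, W j l)))).mulVec x) /
                  (x ⬝ᵥ x) ≤ 2 - c * (a / b) ^ 2 := by
  refine ⟨1/3, by norm_num, ?_⟩
  intro n hn a b ha hab W hWs hdiag hmem x hx horth
  have hb : 0 < b := ha.trans_le hab
  have hsymm : ∀ i j, W j i = W i j := fun i j => hWs.apply i j
  have hn1 : (0 : ℝ) < (n : ℝ) - 1 := by
    have : (3 : ℝ) ≤ (n : ℝ) := by exact_mod_cast hn
    linarith
  have hDpos : ∀ i : Fin n, 0 < ∑ j, W i j := fun i =>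
    lt_of_lt_of_le (mul_pos hn1 ha) (deg_bounds hn ha hab W hdiag hmem i).1
  have hsd : ∀ i : Fin n, Real.sqrt (∑ j, W i j) ≠ 0 := fun i =>
    ne_of_gt (Real.sqrt_pos.mpr (hDpos i))
  have hT : 0 < ∑ k, ∑ j, W k j :=
    Finset.sum_pos (fun i _ => hDpos i) ⟨⟨0, by omega⟩, Finset.mem_univ _⟩
  have hst : Real.sqrt (∑ k, ∑ j, W k j) ≠ 0 := ne_of_gt (Real.sqrt_pos.mpr hT)
  set y : Fin n → ℝ := fun i => x i / Real.sqrt (∑ j, W i j) with hy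
  have hyx : ∀ i, x i = Real.sqrt (∑ j, W i j) * y i := by
    intro i
    rw [hy]
    simp only
    rw [mul_comm, div_mul_cancel₀ (x i) (hsd i)]
  have hyne : y ≠ 0 := by
    intro h
    apply hx
    funext i
    have hyi : y i = 0 := by rw [h]; rfl
    rw [hy] at hyi
    simp only at hyi
    rcases div_eq_zero_iff.mp hyi with h' | h'
    · exact h'
    · exact absurd h' (hsd i)
  have horth' : ∑ i, (∑ j, W i j) * y i = 0 := by
    have e : ∀ i : Fin n, x i * Real.sqrt ((∑ j, W i j) / (∑ k, ∑ j, W k j)) =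
        ((∑ j, W i j) * y i) / Real.sqrt (∑ k, ∑ j, W k j) := by
      intro i
      have h1 : (∑ j, W i j) * (x i / Real.sqrt (∑ j, W i j)) =
          x i * Real.sqrt (∑ j, W i j) := by
        rw [mul_comm, div_mul_eq_mul_div, mul_div_assoc, Real.div_sqrt]
      rw [Real.sqrt_div (hDpos i).le, hy]
      simp only
      rw [h1, mul_div_assoc]
    rw [Finset.sum_congr rfl (fun i _ => e i), ← Finset.sum_div] at horth
    exact (div_eq_zero_iff.mp horth).resolve_right hst
  have hx2 : x ⬝ᵥ x = ∑ i, (∑ j, W i j) * y i ^ 2 := by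
    simp only [dotProduct]
    refine Finset.sum_congr rfl fun i _ => ?_
    rw [hyx i]
    have hD := Real.mul_self_sqrt (hDpos i).le
    linear_combination (y i * y i) * hD
  obtain ⟨hQpos, hg1, hg2⟩ := quad_bounds hn ha hab W hsymm hdiag hmem
    (fun i => ∑ j, W i j) (fun i => rfl) y hyne horth'
  have hform : (x ⬝ᵥ ((1 : Matrix (Fin n) (Fin n) ℝ) -
      Matrix.of (fun i j =>
        W i j / (Real.sqrt (∑ l, W i l) * Real.sqrt (∑ l, W j l)))).mulVec x) =
      (∑ i, (∑ j, W i j) * y i ^ 2) - ∑ i, ∑ j, W i j * (y i * y j) := by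
    rw [sub_mulVec, one_mulVec, dotProduct_sub, hx2]
    congr 1
    simp only [dotProduct, mulVec, Matrix.of_apply]
    refine Finset.sum_congr rfl fun i _ => ?_
    rw [Finset.mul_sum]
    refine Finset.sum_congr rfl fun j _ => ?_
    rw [hy]
    simp only
    ring
  rw [hform, hx2]
  set Q : ℝ := ∑ i, (∑ j, W i j) * y i ^ 2 with hQd
  set B : ℝ := ∑ i, ∑ j, W i j * (y i * y j) with hBd
  have e1 : (1/3 : ℝ) * (a / b) ^ 2 = a ^ 2 / (3 * b ^ 2) := by
    rw [div_pow]
    ring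
  constructor
  · rw [e1, div_le_div_iff₀ (by positivity) hQpos]
    linarith [hg1]
  · rw [e1]
    have e2 : 2 - a ^ 2 / (3 * b ^ 2) = (6 * b ^ 2 - a ^ 2) / (3 * b ^ 2) := by
      field_simp
      ring
    rw [e2, div_le_div_iff₀ hQpos (by positivity)]
    linarith [hg2]
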